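/- Let P, Q be projections in ℂ^{n×n} with ‖P − Q‖ < 1, so that ran(P) and ker(Q) are complementary. The projection R onto ran(P) along ker(Q) satisfies the bound ‖R‖ ≤ ‖P‖/(1 − ‖P − Q‖). -/

import Mathlib

/-- If `P, Q` are projections on `ℂ^n` with `‖P - Q‖ < 1` (so that `ran(P)` and `ker(Q)`
are complementary), the projection `R` onto `ran(P)` along `ker(Q)` satisfies
`‖R‖ ≤ ‖P‖ / (1 - ‖P - Q‖)`. -/
theorem norm_projection_le (n : ℕ)
    (P Q R : EuclideanSpace ℂ (Fin n) →L[ℂ] EuclideanSpace ℂ (Fin n))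
    (hP : P * P = P) (hQ : Q * Q = Q) (h : ‖P - Q‖ < 1)
    (hR : R * R = R)
    (hRran : LinearMap.range (R : EuclideanSpace ℂ (Fin n) →ₗ[ℂ] EuclideanSpace ℂ (Fin n)) =
      LinearMap.range (P : EuclideanSpace ℂ (Fin n) →ₗ[ℂ] EuclideanSpace ℂ (Fin n)))
    (hRker : LinearMap.ker (R : EuclideanSpace ℂ (Fin n) →ₗ[ℂ] EuclideanSpace ℂ (Fin n)) =
      LinearMap.ker (Q : EuclideanSpace ℂ (Fin n) →ₗ[ℂ] EuclideanSpace ℂ (Fin n))) :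
    ‖R‖ ≤ ‖P‖ / (1 - ‖P - Q‖) := by
  -- R ∘ P = P
  have hRP : R * P = P := by
    refine ContinuousLinearMap.ext fun x => ?_
    have hx : P x ∈ LinearMap.range (R : EuclideanSpace ℂ (Fin n) →ₗ[ℂ] EuclideanSpace ℂ (Fin n)) := by
      rw [hRran]; exact ⟨x, rfl⟩
    obtain ⟨y, hy⟩ := hx
    simp only [ContinuousLinearMap.coe_coe] at hy
    have : R (R y) = R y := by
      have := congrArg (fun f => f y) hR
      simpa using this
    simpa [hy] using this
  -- R ∘ Q = R
  have hRQ : R * Q = R := by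
    refine ContinuousLinearMap.ext fun x => ?_
    have hker : Q (x - Q x) = 0 := by
      have := congrArg (fun f => f x) hQ
      simp only [ContinuousLinearMap.mul_apply] at this
      simp [map_sub, this]
    have hxk : (x - Q x) ∈ LinearMap.ker (R : EuclideanSpace ℂ (Fin n) →ₗ[ℂ] EuclideanSpace ℂ (Fin n)) := by
      rw [hRker]; exact hker
    have hR0 : R (x - Q x) = 0 := hxk
    have : R x - R (Q x) = 0 := by simpa [map_sub] using hR0
    simp only [ContinuousLinearMap.mul_apply]
    exact (sub_eq_zero.mp this).symm
  have key : R - P = R * (Q - P) := by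
    rw [mul_sub, hRQ, hRP]
  have hnorm : ‖R - P‖ ≤ ‖R‖ * ‖P - Q‖ := by
    rw [key]
    calc ‖R * (Q - P)‖ ≤ ‖R‖ * ‖Q - P‖ := norm_mul_le _ _
      _ = ‖R‖ * ‖P - Q‖ := by rw [norm_sub_rev]
  have hRle : ‖R‖ ≤ ‖P‖ + ‖R - P‖ := by
    have := norm_sub_norm_le R P
    linarith [abs_le.mp (abs_norm_sub_norm_le R P)]
  have hpos : 0 < 1 - ‖P - Q‖ := by linarith
  rw [le_div_iff₀ hpos]
  nlinarith [norm_nonneg R, norm_nonneg (P - Q)]
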